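/- For all positive reals a, b: 6 R(a,b) ≥ G(a,b) + 5 S(a,b), i.e. S(a,b) − G(a,b) ≤ (6/5)(R(a,b) − G(a,b)). -/

import Mathlib

noncomputable def meanA (a b : ℝ) : ℝ := (a + b) / 2
noncomputable def meanG (a b : ℝ) : ℝ := Real.sqrt (a * b)
noncomputable def meanH (a b : ℝ) : ℝ := 2 * a * b / (a + b)
noncomputable def meanN (a b : ℝ) : ℝ := (a + Real.sqrt (a * b) + b) / 3
noncomputable def meanC (a b : ℝ) : ℝ := (a ^ 2 + b ^ 2) / (a + b)
noncomputable def meanS (a b : ℝ) : ℝ := Real.sqrt ((a ^ 2 + b ^ 2) / 2)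
noncomputable def meanR (a b : ℝ) : ℝ := 2 * (a ^ 2 + a * b + b ^ 2) / (3 * (a + b))
noncomputable def triDelta (a b : ℝ) : ℝ := (a - b) ^ 2 / (a + b)
noncomputable def hellinger (a b : ℝ) : ℝ := (Real.sqrt a - Real.sqrt b) ^ 2 / 2

theorem stmt_15 (a b : ℝ) (ha : 0 < a) (hb : 0 < b) :
    meanG a b + 5 * meanS a b ≤ 6 * meanR a b := by
  unfold meanG meanS meanR
  set g := Real.sqrt (a*b) with hg
  set s := Real.sqrt ((a ^ 2 + b ^ 2) / 2) with hs
  have hg2 : g ^ 2 = a * b := Real.sq_sqrt (by positivity)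
  have hs2 : s ^ 2 = (a ^ 2 + b ^ 2) / 2 := Real.sq_sqrt (by positivity)
  have hg0 : 0 ≤ g := Real.sqrt_nonneg _
  have hs0 : 0 ≤ s := Real.sqrt_nonneg _
  have hab : 0 < a + b := by linarith
  have key : (g + 5*s) * (a + b) ≤ 4 * (a ^ 2 + a * b + b ^ 2) := by
    have hu2 : (a + b) ^ 2 = 2 * s ^ 2 + 2 * g ^ 2 := by rw [hs2, hg2]; ring
    nlinarith [sq_nonneg (s - g), sq_nonneg ((g + 5*s)*(a+b) - 4*(2*s^2+g^2)),
      mul_nonneg (mul_nonneg (sq_nonneg (s-g)) hs0) hg0, sq_nonneg (s*g), sq_nonneg (s+g),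
      mul_nonneg (sq_nonneg (s-g)) (sq_nonneg (s+g)), mul_nonneg hs0 hg0]
  rw [show (6:ℝ) * (2 * (a ^ 2 + a * b + b ^ 2) / (3 * (a + b))) = 4 * (a ^ 2 + a * b + b ^ 2) / (a + b) from by field_simp; ring, le_div_iff₀ hab]
  linarith [key]
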